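/- Let H be an n-dimensional complex Hilbert space and let ((e_x)_{x∈X}, (f_y)_{y∈Y}, x₀, y₀) be a generic labelled pair of maximal abelian subalgebras with base points. Choose unit vectors ξ, η with e_{x₀}ξ = ξ, f_{y₀}η = η and ⟨ξ, η⟩ > 0; for each x ∈ X let ξ_x be the unique unit vector with e_x ξ_x = ξ_x and ⟨ξ_x, η⟩ > 0, and for each y ∈ Y let η_y be the unique unit vector with f_y η_y = η_y and ⟨ξ, η_y⟩ > 0. Then the matrix C_{xy} = ⟨ξ_x, η_y⟩ is independent of the choice of the normalized pair (ξ, η), the matrix C = (C_{xy}) is unitary, and all entries of its row indexed by x₀ and of its column indexed by y₀ are strictly positive real numbers. -/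

import Mathlib

noncomputable section

open scoped ComplexInnerProductSpace ComplexConjugate

/-- A complex number is a strictly positive real. -/
def IsPosReal (z : ℂ) : Prop := 0 < z.re ∧ z.im = 0

variable {H : Type} [NormedAddCommGroup H] [InnerProductSpace ℂ H] [FiniteDimensional ℂ H]
variable {X Y : Type} [Fintype X] [Fintype Y] [DecidableEq X] [DecidableEq Y]

/-- A family of pairwise orthogonal rank-one orthogonal projections summing to
the identity. -/
def IsProjFamily (e : X → H →L[ℂ] H) : Prop :=
  (∀ x, IsIdempotentElem (e x)) ∧ (∀ x, IsSelfAdjoint (e x)) ∧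
  (∀ x, Module.finrank ℂ (LinearMap.range ((e x : H →L[ℂ] H) : H →ₗ[ℂ] H)) = 1) ∧
  (∀ x x', x ≠ x' → e x * e x' = 0) ∧ (∑ x, e x = 1)

/-- Genericity of a labelled pair with base points: `Tr (e x₀ * f y) > 0` for all `y`
and `Tr (e x * f y₀) > 0` for all `x`. -/
def IsGeneric (e : X → H →L[ℂ] H) (f : Y → H →L[ℂ] H) (x₀ : X) (y₀ : Y) : Prop :=
  (∀ y, IsPosReal (LinearMap.trace ℂ H ((e x₀ * f y : H →L[ℂ] H) : H →ₗ[ℂ] H))) ∧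
  (∀ x, IsPosReal (LinearMap.trace ℂ H ((e x * f y₀ : H →L[ℂ] H) : H →ₗ[ℂ] H)))

/-- `C` is the CKM matrix of the generic labelled pair `(e, f, x₀, y₀)`: there are unit
vectors `ξ, η` with `e x₀ ξ = ξ`, `f y₀ η = η`, `⟪ξ, η⟫ > 0`, and families of unit
vectors `xi x` (resp. `eta y`) fixed by `e x` (resp. `f y`) with `⟪xi x, η⟫ > 0`
(resp. `⟪ξ, eta y⟫ > 0`), such that `C x y = ⟪xi x, eta y⟫`. -/
def IsCKM (e : X → H →L[ℂ] H) (f : Y → H →L[ℂ] H) (x₀ : X) (y₀ : Y)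
    (C : X → Y → ℂ) : Prop :=
  ∃ (ξ η : H) (xi : X → H) (eta : Y → H),
    ‖ξ‖ = 1 ∧ ‖η‖ = 1 ∧ e x₀ ξ = ξ ∧ f y₀ η = η ∧ IsPosReal ⟪ξ, η⟫ ∧
    (∀ x, ‖xi x‖ = 1 ∧ e x (xi x) = xi x ∧ IsPosReal ⟪xi x, η⟫) ∧
    (∀ y, ‖eta y‖ = 1 ∧ f y (eta y) = eta y ∧ IsPosReal ⟪ξ, eta y⟫) ∧
    (∀ x y, C x y = ⟪xi x, eta y⟫)

set_option linter.unusedSectionVars false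
set_option linter.unusedVariables false

/-- A complex number of modulus 1 that multiplies a positive real to a positive real is 1. -/
lemma aux_unit_of_posreal_mul {w z : ℂ} (hw : ‖w‖ = 1) (hz : IsPosReal z)
    (h : IsPosReal (w * z)) : w = 1 := by
  obtain ⟨hzre, hzim⟩ := hz
  obtain ⟨hre, him⟩ := h
  have hz0 : z = (z.re : ℂ) := by
    apply Complex.ext <;> simp [hzim]
  rw [hz0] at hre him
  simp [Complex.mul_im, Complex.mul_re] at hre him
  have hwim : w.im = 0 := by
    rcases him with h | h
    · exact h
    · exact absurd h (ne_of_gt hzre)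
  have hwre : 0 < w.re := by nlinarith
  have : ‖w‖ = |w.re| := by
    rw [Complex.norm_def, Complex.normSq_apply, hwim]
    simp [← sq, Real.sqrt_sq_eq_abs]
  rw [this, abs_of_pos hwre] at hw
  exact Complex.ext hw hwim

/-- Two fixed vectors of a rank-one projection are proportional. -/
lemma aux_rank_one (P : H →L[ℂ] H)
    (hr : Module.finrank ℂ (LinearMap.range ((P : H →L[ℂ] H) : H →ₗ[ℂ] H)) = 1)
    {u v : H} (hu : ‖u‖ = 1) (hPu : P u = u) (hPv : P v = v) : ∃ c : ℂ, v = c • u := by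
  set S := LinearMap.range ((P : H →L[ℂ] H) : H →ₗ[ℂ] H) with hS
  have huS : u ∈ S := ⟨u, hPu⟩
  have hvS : v ∈ S := ⟨v, hPv⟩
  have hu0 : (⟨u, huS⟩ : S) ≠ 0 := by
    intro h
    have : u = 0 := congrArg Subtype.val h
    rw [this] at hu; simp at hu
  obtain ⟨c, hc⟩ := (finrank_eq_one_iff_of_nonzero' (⟨u, huS⟩ : S) hu0).mp hr ⟨v, hvS⟩
  exact ⟨c, (congrArg Subtype.val hc).symm⟩

/-- A rank-one self-adjoint projection fixing the unit vector `u` acts as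
`v ↦ ⟪u, v⟫ • u`. -/
lemma aux_coeff (P : H →L[ℂ] H) (hsa : IsSelfAdjoint P)
    (hid : IsIdempotentElem P)
    (hr : Module.finrank ℂ (LinearMap.range ((P : H →L[ℂ] H) : H →ₗ[ℂ] H)) = 1)
    {u : H} (hu : ‖u‖ = 1) (hPu : P u = u) (v : H) : P v = ⟪u, v⟫ • u := by
  have hPPv : P (P v) = P v := by
    have := congrArg (fun T : H →L[ℂ] H => T v) hid
    simpa using this
  obtain ⟨c, hc⟩ := aux_rank_one P hr hu hPu hPPv
  have hcval : c = ⟪u, v⟫ := by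
    have h1 : ⟪u, P v⟫ = c := by
      rw [hc, inner_smul_right, inner_self_eq_norm_sq_to_K, hu]
      norm_num
    have h2 : ⟪u, P v⟫ = ⟪u, v⟫ := by
      have := hsa.isSymmetric u v
      simp only [ContinuousLinearMap.coe_coe] at this
      rw [← this, hPu]
    rw [← h1, h2]
  rw [hc, hcval]

/-- Parseval identity for the unit vectors of a projection family. -/
lemma aux_parseval (e : X → H →L[ℂ] H) (he : IsProjFamily e) (xi : X → H)
    (hxi : ∀ x, ‖xi x‖ = 1 ∧ e x (xi x) = xi x) (u v : H) :
    ⟪u, v⟫ = ∑ x, ⟪u, xi x⟫ * ⟪xi x, v⟫ := by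
  obtain ⟨hid, hsa, hrk, _, hsum⟩ := he
  have hv : v = ∑ x, ⟪xi x, v⟫ • xi x := by
    have h1 : (∑ x, e x) v = v := by rw [hsum]; rfl
    conv_lhs => rw [← h1]
    rw [ContinuousLinearMap.sum_apply]
    exact Finset.sum_congr rfl fun x _ =>
      aux_coeff (e x) (hsa x) (hid x) (hrk x) (hxi x).1 (hxi x).2 v
  conv_lhs => rw [hv]
  rw [inner_sum]
  exact Finset.sum_congr rfl fun x _ => by rw [inner_smul_right]; ring

lemma aux_abs_one {c : ℂ} {u v : H} (hu : ‖u‖ = 1) (hv : ‖v‖ = 1) (h : v = c • u) :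
    ‖c‖ = 1 := by
  have h1 : ‖v‖ = ‖c‖ * ‖u‖ := by rw [h, norm_smul]
  rw [hv, hu, mul_one] at h1
  rw [← h1]

/-- Unit vectors of distinct members of a projection family are orthogonal. -/
lemma aux_orth (e : X → H →L[ℂ] H) (he : IsProjFamily e) (xi : X → H)
    (hxi : ∀ x, e x (xi x) = xi x) {x₁ x₂ : X} (hne : x₁ ≠ x₂) :
    ⟪xi x₁, xi x₂⟫ = 0 := by
  obtain ⟨_, hsa, _, horth, _⟩ := he
  have h0 : (e x₁ * e x₂) (xi x₂) = 0 := by rw [horth x₁ x₂ hne]; rfl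
  have h1 : e x₁ (e x₂ (xi x₂)) = 0 := h0
  rw [hxi x₂] at h1
  have h2 := (hsa x₁).isSymmetric (xi x₁) (xi x₂)
  simp only [ContinuousLinearMap.coe_coe] at h2
  rw [hxi x₁] at h2
  rw [h2, h1, inner_zero_right]

/-- **Proposition 2.3 (well-definedness, unitarity, positivity).** For a generic labelled
pair of maximal abelian subalgebras with base points on an `n`-dimensional complex Hilbert
space, the CKM matrix `C x y = ⟪ξ_x, η_y⟫` is independent of the choice of normalized pair,
is a unitary matrix, and the row indexed by `x₀` and the column indexed by `y₀` have
strictly positive real entries. -/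
theorem stmt1 {n : ℕ} {H : Type} [NormedAddCommGroup H] [InnerProductSpace ℂ H]
    [FiniteDimensional ℂ H] (hdim : Module.finrank ℂ H = n)
    {X Y : Type} [Fintype X] [Fintype Y] [DecidableEq X] [DecidableEq Y]
    (hX : Fintype.card X = n) (hY : Fintype.card Y = n)
    (e : X → H →L[ℂ] H) (f : Y → H →L[ℂ] H) (x₀ : X) (y₀ : Y)
    (he : IsProjFamily e) (hf : IsProjFamily f)
    (hgen : IsGeneric e f x₀ y₀)
    (C : X → Y → ℂ) (hC : IsCKM e f x₀ y₀ C) :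
    (∀ C' : X → Y → ℂ, IsCKM e f x₀ y₀ C' → C' = C) ∧
    (∀ y₁ y₂ : Y, ∑ x, conj (C x y₁) * C x y₂ = if y₁ = y₂ then 1 else 0) ∧
    (∀ x₁ x₂ : X, ∑ y, C x₁ y * conj (C x₂ y) = if x₁ = x₂ then 1 else 0) ∧
    (∀ y, IsPosReal (C x₀ y)) ∧ (∀ x, IsPosReal (C x y₀)) := by
  obtain ⟨ξ, η, xi, eta, hξn, hηn, heξ, hfη, hpos, hxi, heta, hCeq⟩ := hC
  have hxi0 : xi x₀ = ξ := by
    obtain ⟨c, hc⟩ := aux_rank_one (e x₀) (he.2.2.1 x₀) hξn heξ (hxi x₀).2.1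
    have habs : ‖c‖ = 1 := aux_abs_one hξn (hxi x₀).1 hc
    have hinner : ⟪xi x₀, η⟫ = conj c * ⟪ξ, η⟫ := by rw [hc, inner_smul_left]
    have h1 : (starRingEnd ℂ) c = 1 := by
      apply aux_unit_of_posreal_mul _ hpos
      · rw [← hinner]; exact (hxi x₀).2.2
      · simpa using habs
    have hc1 : c = 1 := by
      have := congrArg (starRingEnd ℂ) h1
      simpa using this
    rw [hc, hc1, one_smul]
  have heta0 : eta y₀ = η := by
    obtain ⟨c, hc⟩ := aux_rank_one (f y₀) (hf.2.2.1 y₀) hηn hfη (heta y₀).2.1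
    have habs : ‖c‖ = 1 := aux_abs_one hηn (heta y₀).1 hc
    have hinner : ⟪ξ, eta y₀⟫ = c * ⟪ξ, η⟫ := by rw [hc, inner_smul_right]
    have hc1 : c = 1 := by
      apply aux_unit_of_posreal_mul habs hpos
      rw [← hinner]; exact (heta y₀).2.2
    rw [hc, hc1, one_smul]
  refine ⟨?_, ?_, ?_, ?_, ?_⟩
  · -- uniqueness
    intro C' hC'
    obtain ⟨ξ', η', xi', eta', hξn', hηn', heξ', hfη', hpos', hxi', heta', hCeq'⟩ := hC'
    obtain ⟨a, ha⟩ := aux_rank_one (e x₀) (he.2.2.1 x₀) hξn heξ heξ'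
    obtain ⟨b, hb⟩ := aux_rank_one (f y₀) (hf.2.2.1 y₀) hηn hfη hfη'
    have haabs : ‖a‖ = 1 := aux_abs_one hξn hξn' ha
    have hbabs : ‖b‖ = 1 := aux_abs_one hηn hηn' hb
    have hab : conj a * b = 1 := by
      apply aux_unit_of_posreal_mul _ hpos
      · have : ⟪ξ', η'⟫ = conj a * b * ⟪ξ, η⟫ := by
          rw [ha, hb, inner_smul_left, inner_smul_right]; ring
        rw [← this]; exact hpos'
      · rw [norm_mul]; simp [haabs, hbabs]
    have hb0 : b ≠ 0 := by
      intro h; rw [h, mul_zero] at hab; exact zero_ne_one hab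
    funext x y
    obtain ⟨c, hc⟩ := aux_rank_one (e x) (he.2.2.1 x) (hxi x).1 (hxi x).2.1 (hxi' x).2.1
    obtain ⟨d, hd⟩ := aux_rank_one (f y) (hf.2.2.1 y) (heta y).1 (heta y).2.1 (heta' y).2.1
    have hcabs : ‖c‖ = 1 := aux_abs_one (hxi x).1 (hxi' x).1 hc
    have hdabs : ‖d‖ = 1 := aux_abs_one (heta y).1 (heta' y).1 hd
    have hcb : conj c * b = 1 := by
      apply aux_unit_of_posreal_mul _ (hxi x).2.2
      · have : ⟪xi' x, η'⟫ = conj c * b * ⟪xi x, η⟫ := by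
          rw [hc, hb, inner_smul_left, inner_smul_right]; ring
        rw [← this]; exact (hxi' x).2.2
      · rw [norm_mul]; simp [hcabs, hbabs]
    have had : conj a * d = 1 := by
      apply aux_unit_of_posreal_mul _ (heta y).2.2
      · have : ⟪ξ', eta' y⟫ = conj a * d * ⟪ξ, eta y⟫ := by
          rw [ha, hd, inner_smul_left, inner_smul_right]; ring
        rw [← this]; exact (heta' y).2.2
      · rw [norm_mul]; simp [haabs, hdabs]
    have hca : conj c = conj a := mul_right_cancel₀ hb0 (hcb.trans hab.symm)
    have key : conj c * d = 1 := by rw [hca]; exact had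
    rw [hCeq' x y, hCeq x y, hc, hd, inner_smul_left, inner_smul_right, ← mul_assoc, key,
      one_mul]
  · intro y₁ y₂
    have hpar := aux_parseval e he xi (fun x => ⟨(hxi x).1, (hxi x).2.1⟩) (eta y₁) (eta y₂)
    have step : ∀ x, conj (C x y₁) * C x y₂ = ⟪eta y₁, xi x⟫ * ⟪xi x, eta y₂⟫ := by
      intro x; rw [hCeq, hCeq, inner_conj_symm]
    rw [Finset.sum_congr rfl fun x _ => step x, ← hpar]
    split
    · next h =>
      subst h
      rw [inner_self_eq_norm_sq_to_K, (heta y₁).1]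
      norm_num
    · next h => exact aux_orth f hf eta (fun y => (heta y).2.1) h
  · intro x₁ x₂
    have hpar := aux_parseval f hf eta (fun y => ⟨(heta y).1, (heta y).2.1⟩) (xi x₁) (xi x₂)
    have step : ∀ y, C x₁ y * conj (C x₂ y) = ⟪xi x₁, eta y⟫ * ⟪eta y, xi x₂⟫ := by
      intro y; rw [hCeq, hCeq, inner_conj_symm]
    rw [Finset.sum_congr rfl fun y _ => step y, ← hpar]
    split
    · next h =>
      subst h
      rw [inner_self_eq_norm_sq_to_K, (hxi x₁).1]
      norm_num
    · next h => exact aux_orth e he xi (fun x => (hxi x).2.1) h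
  · intro y; rw [hCeq, hxi0]; exact (heta y).2.2
  · intro x; rw [hCeq, heta0]; exact (hxi x).2.2
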